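/- Let A be a Sidon subset of {1,...,n} with |A| = r. For every positive integer u ≤ r, one has r·u − u(u+1)/2 ≤ the number of distinct values among the differences a_j − a_i with 1 ≤ j − i ≤ u (i.e., all such differences are pairwise distinct), and their sum is less than n·u(u+1)/2. -/

import Mathlib

private lemma gauss_icc (u : ℕ) : 2 * (∑ k ∈ Finset.Icc 1 u, k) = u * (u + 1) := by
  induction u with
  | zero => simp
  | succ m ih =>
    rw [Finset.sum_Icc_succ_top (by omega)]
    ring_nf
    ring_nf at ih
    omega

theorem erdos_turan_difference_count (n r u : ℕ) (hu : 1 ≤ u) (hur : u ≤ r)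
    (a : ℕ → ℕ)
    (hmono : ∀ i ∈ Finset.Icc 1 r, ∀ j ∈ Finset.Icc 1 r, i < j → a i < a j)
    (hrange : ∀ i ∈ Finset.Icc 1 r, 1 ≤ a i ∧ a i ≤ n)
    (hsidon : ∀ i ∈ Finset.Icc 1 r, ∀ j ∈ Finset.Icc 1 r,
      ∀ k ∈ Finset.Icc 1 r, ∀ l ∈ Finset.Icc 1 r,
      a i + a j = a k + a l → (a i = a k ∧ a j = a l) ∨ (a i = a l ∧ a j = a k)) :
    r * u - u * (u + 1) / 2 ≤
      (((Finset.Icc 1 r ×ˢ Finset.Icc 1 r).filter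
        fun p => p.1 < p.2 ∧ p.2 - p.1 ≤ u).image fun p => a p.2 - a p.1).card ∧
    (∑ p ∈ (Finset.Icc 1 r ×ˢ Finset.Icc 1 r).filter
        (fun p => p.1 < p.2 ∧ p.2 - p.1 ≤ u), (a p.2 - a p.1)) <
      n * (u * (u + 1) / 2) := by
  set S := (Finset.Icc 1 r ×ˢ Finset.Icc 1 r).filter
      (fun p => p.1 < p.2 ∧ p.2 - p.1 ≤ u) with hS
  have hmemS : ∀ p : ℕ × ℕ, p ∈ S ↔
      (1 ≤ p.1 ∧ p.1 ≤ r) ∧ (1 ≤ p.2 ∧ p.2 ≤ r) ∧ p.1 < p.2 ∧ p.2 - p.1 ≤ u := by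
    intro p
    simp only [hS, Finset.mem_filter, Finset.mem_product, Finset.mem_Icc]
    tauto
  -- decomposition of S as a union over k of rows
  have hSdecomp : S = (Finset.Icc 1 u).biUnion
      (fun k => (Finset.Icc 1 (r - k)).image (fun i => (i, i + k))) := by
    ext p
    rw [hmemS]
    simp only [Finset.mem_biUnion, Finset.mem_Icc, Finset.mem_image]
    constructor
    · rintro ⟨⟨h1, h2⟩, ⟨h3, h4⟩, h5, h6⟩
      exact ⟨p.2 - p.1, ⟨by omega, h6⟩, p.1, by omega, by
        cases p; simp at *; omega⟩
    · rintro ⟨k, ⟨hk1, hk2⟩, i, ⟨hi1, hi2⟩, rfl⟩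
      simp only
      omega
  have hdisj : ((Finset.Icc 1 u : Finset ℕ) : Set ℕ).PairwiseDisjoint
      (fun k => (Finset.Icc 1 (r - k)).image (fun i => (i, i + k))) := by
    intro k hk l hl hkl
    simp only [Finset.disjoint_left, Finset.mem_image, Finset.mem_Icc]
    rintro p ⟨i, hi, rfl⟩ ⟨j, hj, hij⟩
    apply hkl
    have h1 : j = i := congrArg Prod.fst hij
    have h2 : j + l = i + k := congrArg Prod.snd hij
    omega
  have hinj : ∀ k, Set.InjOn (fun i => (i, i + k)) (Finset.Icc 1 (r - k)) := by
    intro k i _ j _ h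
    exact (Prod.mk.injEq .. ▸ h).1
  have hmonoinj : ∀ i ∈ Finset.Icc 1 r, ∀ j ∈ Finset.Icc 1 r, a i = a j → i = j := by
    intro i hi j hj h
    by_contra hne
    rcases Nat.lt_or_ge i j with h' | h'
    · exact absurd h (Nat.ne_of_lt (hmono i hi j hj h'))
    · have : j < i := by omega
      exact absurd h.symm (Nat.ne_of_lt (hmono j hj i hi this))
  -- injectivity of the difference map on S
  have hdiffinj : Set.InjOn (fun p : ℕ × ℕ => a p.2 - a p.1) S := by
    intro p hp q hq h
    rw [Finset.mem_coe, hmemS] at hp hq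
    obtain ⟨hp1, hp2, hp3, hp4⟩ := hp
    obtain ⟨hq1, hq2, hq3, hq4⟩ := hq
    have hp1' : p.1 ∈ Finset.Icc 1 r := Finset.mem_Icc.2 hp1
    have hp2' : p.2 ∈ Finset.Icc 1 r := Finset.mem_Icc.2 hp2
    have hq1' : q.1 ∈ Finset.Icc 1 r := Finset.mem_Icc.2 hq1
    have hq2' : q.2 ∈ Finset.Icc 1 r := Finset.mem_Icc.2 hq2
    have hap : a p.1 < a p.2 := hmono _ hp1' _ hp2' hp3
    have haq : a q.1 < a q.2 := hmono _ hq1' _ hq2' hq3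
    simp only at h
    have hsum : a p.2 + a q.1 = a q.2 + a p.1 := by omega
    rcases hsidon _ hp2' _ hq1' _ hq2' _ hp1' hsum with ⟨h1, h2⟩ | ⟨h1, h2⟩
    · have e1 : p.2 = q.2 := hmonoinj _ hp2' _ hq2' h1
      have e2 : q.1 = p.1 := hmonoinj _ hq1' _ hp1' h2
      exact Prod.ext e2.symm e1
    · omega
  have hn1 : 1 ≤ n := by
    have := hrange 1 (Finset.mem_Icc.2 ⟨le_refl 1, by omega⟩)
    omega
  constructor
  · -- cardinality bound
    rw [Finset.card_image_of_injOn hdiffinj, hSdecomp,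
      Finset.card_biUnion (fun k hk l hl h => hdisj hk hl h)]
    have hcard : ∀ k ∈ Finset.Icc 1 u,
        ((Finset.Icc 1 (r - k)).image (fun i => (i, i + k))).card = r - k := by
      intro k hk
      rw [Finset.card_image_of_injOn (hinj k), Nat.card_Icc]
      omega
    rw [Finset.sum_congr rfl hcard]
    have h2 : 2 * (∑ k ∈ Finset.Icc 1 u, k) = u * (u + 1) := gauss_icc u
    have hsum : (∑ k ∈ Finset.Icc 1 u, (r - k)) + (∑ k ∈ Finset.Icc 1 u, k)
        = r * u := by
      rw [← Finset.sum_add_distrib]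
      have : ∀ k ∈ Finset.Icc 1 u, r - k + k = r := by
        intro k hk
        rw [Finset.mem_Icc] at hk
        omega
      rw [Finset.sum_congr rfl this, Finset.sum_const, Nat.card_Icc]
      simp [Nat.mul_comm]
    have hdiv : u * (u + 1) / 2 = ∑ k ∈ Finset.Icc 1 u, k := by omega
    rw [hdiv]
    show r * u - ∑ k ∈ Finset.Icc 1 u, k ≤ ∑ k ∈ Finset.Icc 1 u, (r - k)
    omega
  · -- sum bound
    rw [hSdecomp, Finset.sum_biUnion hdisj]
    have hrow : ∀ k ∈ Finset.Icc 1 u,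
        (∑ p ∈ (Finset.Icc 1 (r - k)).image (fun i => (i, i + k)),
          (a p.2 - a p.1)) ≤ k * n - k := by
      intro k hk
      rw [Finset.mem_Icc] at hk
      rw [Finset.sum_image (fun i hi j hj h => hinj k hi hj h)]
      simp only
      -- cast to integers and telescope
      have hcast : ∀ i ∈ Finset.Icc 1 (r - k), (↑(a (i + k) - a i) : ℤ)
          = (a (i + k) : ℤ) - a i := by
        intro i hi
        rw [Finset.mem_Icc] at hi
        have : a i < a (i + k) := hmono i (Finset.mem_Icc.2 (by omega)) (i + k)
          (Finset.mem_Icc.2 (by omega)) (by omega)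
        push_cast [Nat.cast_sub (le_of_lt this)]
        ring
      have key : ((∑ i ∈ Finset.Icc 1 (r - k), (a (i + k) - a i) : ℕ) : ℤ)
          ≤ (k : ℤ) * n - k := by
        push_cast
        rw [Finset.sum_congr rfl hcast, Finset.sum_sub_distrib]
        have hre : (∑ i ∈ Finset.Icc 1 (r - k), (a (i + k) : ℤ))
            = ∑ j ∈ Finset.Icc (1 + k) ((r - k) + k), (a j : ℤ) := by
          rw [← Finset.map_add_right_Icc, Finset.sum_map]
          simp [addRightEmbedding_apply]
        rw [hre, show (r - k) + k = r by omega]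
        have split1 : (∑ j ∈ Finset.Ioc 0 k, (a j : ℤ))
            + ∑ j ∈ Finset.Ioc k r, (a j : ℤ) = ∑ j ∈ Finset.Ioc 0 r, (a j : ℤ) :=
          Finset.sum_Ioc_consecutive _ (by omega) (by omega)
        have split2 : (∑ j ∈ Finset.Ioc 0 (r - k), (a j : ℤ))
            + ∑ j ∈ Finset.Ioc (r - k) r, (a j : ℤ)
            = ∑ j ∈ Finset.Ioc 0 r, (a j : ℤ) :=
          Finset.sum_Ioc_consecutive _ (by omega) (by omega)
        have e1 : Finset.Icc (1 + k) r = Finset.Ioc k r := by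
          ext x; simp only [Finset.mem_Icc, Finset.mem_Ioc]; omega
        have e2 : Finset.Icc 1 (r - k) = Finset.Ioc 0 (r - k) := by
          ext x; simp [Nat.lt_iff_add_one_le]
        rw [e1, e2]
        have hub : (∑ j ∈ Finset.Ioc (r - k) r, (a j : ℤ)) ≤ k * n := by
          calc (∑ j ∈ Finset.Ioc (r - k) r, (a j : ℤ))
              ≤ ∑ j ∈ Finset.Ioc (r - k) r, (n : ℤ) := by
                apply Finset.sum_le_sum
                intro j hj
                rw [Finset.mem_Ioc] at hj
                exact_mod_cast (hrange j (Finset.mem_Icc.2 ⟨by omega, hj.2⟩)).2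
            _ = k * n := by
                rw [Finset.sum_const, Nat.card_Ioc]
                push_cast [show r - (r - k) = k by omega]
                ring
        have hlb : (k : ℤ) ≤ ∑ j ∈ Finset.Ioc 0 k, (a j : ℤ) := by
          calc (k : ℤ) = ∑ j ∈ Finset.Ioc 0 k, (1 : ℤ) := by
                rw [Finset.sum_const, Nat.card_Ioc]; simp
            _ ≤ ∑ j ∈ Finset.Ioc 0 k, (a j : ℤ) := by
                apply Finset.sum_le_sum
                intro j hj
                rw [Finset.mem_Ioc] at hj
                exact_mod_cast (hrange j (Finset.mem_Icc.2 ⟨by omega, by omega⟩)).1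
        omega
      have hkn : k ≤ k * n := Nat.le_mul_of_pos_right k (by omega)
      omega
    calc (∑ k ∈ Finset.Icc 1 u, ∑ p ∈ (Finset.Icc 1 (r - k)).image
            (fun i => (i, i + k)), (a p.2 - a p.1))
        ≤ ∑ k ∈ Finset.Icc 1 u, (k * n - k) := Finset.sum_le_sum hrow
      _ ≤ ∑ k ∈ Finset.Icc 1 u, k * (n - 1) := by
          apply Finset.sum_le_sum
          intro k hk
          have : k * (n - 1) + k * 1 = k * n := by
            rw [← Nat.mul_add]; congr 1; omega
          omega
      _ = (∑ k ∈ Finset.Icc 1 u, k) * (n - 1) := by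
          rw [Finset.sum_mul]
      _ < n * (u * (u + 1) / 2) := by
          have h2 := gauss_icc u
          have hdiv : u * (u + 1) / 2 = ∑ k ∈ Finset.Icc 1 u, k := by omega
          rw [hdiv]
          have hpos : 1 ≤ ∑ k ∈ Finset.Icc 1 u, k :=
            Finset.single_le_sum (f := fun k => k) (fun i _ => Nat.zero_le i)
              (Finset.mem_Icc.2 ⟨le_refl 1, hu⟩)
          calc (∑ k ∈ Finset.Icc 1 u, k) * (n - 1)
              < (∑ k ∈ Finset.Icc 1 u, k) * (n - 1) + (∑ k ∈ Finset.Icc 1 u, k) := by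
                omega
            _ = (∑ k ∈ Finset.Icc 1 u, k) * n := by
                rw [← Nat.mul_succ]
                congr 1
                omega
            _ = n * (∑ k ∈ Finset.Icc 1 u, k) := Nat.mul_comm _ _
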